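/- Let D be a nonzero real N×W matrix each of whose columns sums to zero (Σ_i D i j = 0 for every column index j). Then the number of nonzero rows of D (indices i such that the row fun j => D i j is not identically zero) is at least rank(D) + 1. -/

import Mathlib

open Matrix

open scoped Classical in
/-- If `D` is a nonzero `N × W` real matrix each of whose columns sums to zero, then the
number of nonzero rows of `D` is at least `rank D + 1`. -/
theorem nonzero_rows_ge_rank_succ (N W : ℕ) (D : Matrix (Fin N) (Fin W) ℝ)
    (hD : D ≠ 0) (hcol : ∀ j : Fin W, ∑ i, D i j = 0) :
    D.rank + 1 ≤ (Finset.univ.filter fun i : Fin N => ∃ j : Fin W, D i j ≠ 0).card := by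
  set S := Finset.univ.filter fun i : Fin N => ∃ j : Fin W, D i j ≠ 0 with hS
  -- rows indexed by S
  set b : S → (Fin W → ℝ) := fun i => D i.1 with hb
  -- rows outside S are zero
  have hzero : ∀ i : Fin N, i ∉ S → D i = 0 := by
    intro i hi
    ext j
    by_contra h
    exact hi (Finset.mem_filter.mpr ⟨Finset.mem_univ _, ⟨j, h⟩⟩)
  -- S nonempty
  have hne : S.Nonempty := by
    by_contra h
    apply hD
    ext i j
    have : i ∉ S := fun hi => h ⟨i, hi⟩
    simpa using congrFun (hzero i this) j
  -- rank D ≤ finrank of span of b's range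
  have h1 : D.rank ≤ Module.finrank ℝ (Submodule.span ℝ (Set.range b)) := by
    rw [Matrix.rank_eq_finrank_span_row]
    apply Submodule.finrank_mono
    apply Submodule.span_le.mpr
    rintro _ ⟨i, rfl⟩
    by_cases hi : i ∈ S
    · exact Submodule.subset_span ⟨⟨i, hi⟩, rfl⟩
    · rw [show D.row i = 0 from hzero i hi]; exact Submodule.zero_mem _
  -- b is not linearly independent
  have hnotli : ¬ LinearIndependent ℝ b := by
    intro hli
    rw [Fintype.linearIndependent_iff] at hli
    have hsum : ∑ i : S, (1 : ℝ) • b i = 0 := by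
      ext j
      simp only [one_smul, Finset.sum_apply]
      have : ∑ i : S, b i j = ∑ i ∈ S, D i j := by
        rw [← Finset.sum_attach S (fun i => D i j)]; rfl
      rw [this]
      rw [Finset.sum_subset (Finset.subset_univ S)]
      · exact hcol j
      · intro i _ hi
        simpa using congrFun (hzero i hi) j
    obtain ⟨i, hi⟩ := hne
    exact one_ne_zero (hli (fun _ => (1:ℝ)) hsum ⟨i, hi⟩)
  -- hence finrank span < card S
  have h2 : Module.finrank ℝ (Submodule.span ℝ (Set.range b)) < Fintype.card S := by
    rcases lt_or_eq_of_le (finrank_range_le_card (R := ℝ) b) with h | h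
    · simpa [Set.finrank] using h
    · exact absurd (linearIndependent_iff_card_eq_finrank_span.mpr
        (by simpa [Set.finrank] using h.symm)) hnotli
  have : Fintype.card S = S.card := Fintype.card_coe S
  omega
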